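/- Let K be a compact Hausdorff space and let ν ∈ M(K) be a compensation of μ ∈ M(K). Then ‖μ − ν‖ ≤ 2‖μ⁻‖ and ‖ν‖ ≤ ‖μ‖. -/

import Mathlib

open MeasureTheory

noncomputable section

variable {K : Type*} [TopologicalSpace K] [MeasurableSpace K]

/-- The integral of a function against a signed measure. -/
def sInt (μ : SignedMeasure K) (f : K → ℝ) : ℝ :=
  ∫ x, f x ∂μ.toJordanDecomposition.posPart - ∫ x, f x ∂μ.toJordanDecomposition.negPart

/-- The total variation norm of a signed measure. -/
def mNorm (μ : SignedMeasure K) : ℝ := (μ.totalVariation Set.univ).toReal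

/-- `ν` is a compensation of `μ`: if `μ(K) > 0` then `0 ≤ ν ≤ μ⁺` and `ν(K) = μ(K)`;
if `μ(K) ≤ 0` then `ν = 0`. -/
def IsCompensation (μ ν : SignedMeasure K) : Prop :=
  if 0 < μ Set.univ then
    0 ≤ ν ∧ ν ≤ μ.toJordanDecomposition.posPart.toSignedMeasure ∧ ν Set.univ = μ Set.univ
  else ν = 0

/-- A family of signed measures indexed by a topological space is weak*-continuous. -/
def WStarContinuousFamily {T : Type*} [TopologicalSpace T] (F : T → SignedMeasure K) : Prop :=
  ∀ g : C(K, ℝ), Continuous fun t => sInt (F t) g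

/-- Membership in `W(K)`: a weak*-continuous map from `K` into the closed unit ball of the
space `M(K)` of regular Borel signed measures. -/
def MemW (F : K → SignedMeasure K) : Prop :=
  WStarContinuousFamily F ∧ ∀ t, (F t).totalVariation.Regular ∧ mNorm (F t) ≤ 1

/-- `K` admits local compensation: every element of `W(K)` admits a compensation in `W(K)`. -/
def AdmitsLocalCompensation (K : Type*) [TopologicalSpace K] [MeasurableSpace K] : Prop :=
  ∀ F : K → SignedMeasure K, MemW F →
    ∃ G : K → SignedMeasure K, MemW G ∧ ∀ t, IsCompensation (F t) (G t)

/-- The weak* topology on signed measures. -/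
instance wstarTopology : TopologicalSpace (SignedMeasure K) :=
  TopologicalSpace.induced (fun μ (g : C(K, ℝ)) => sInt μ g) inferInstance

/-- `M(K)`: the regular Borel signed measures on `K`, with the weak* topology. -/
def MK (K : Type*) [TopologicalSpace K] [MeasurableSpace K] : Type _ :=
  {μ : SignedMeasure K // μ.totalVariation.Regular}

instance : TopologicalSpace (MK K) := instTopologicalSpaceSubtype

/-- The closed unit ball `B_{M(K)}` of `M(K)`, with the weak* topology. -/
def BMK (K : Type*) [TopologicalSpace K] [MeasurableSpace K] : Type _ :=
  {μ : SignedMeasure K // μ.totalVariation.Regular ∧ mNorm μ ≤ 1}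

instance : TopologicalSpace (BMK K) := instTopologicalSpaceSubtype

/-- A compensation function on `K`: a weak*-to-weak*-continuous map `ξ : M(K) → M(K)` such
that `ξ μ` is a compensation of `μ` for every `μ ∈ M(K)`. -/
def IsCompensationFunction (ξ : MK K → MK K) : Prop :=
  Continuous ξ ∧ ∀ μ : MK K, IsCompensation μ.1 (ξ μ).1

/-- A `B_{M(K)}`-compensation function on `K`. -/
def IsBallCompensationFunction (ξ : BMK K → MK K) : Prop :=
  Continuous ξ ∧ ∀ μ : BMK K, IsCompensation μ.1 (ξ μ).1

/-- The numerical radius of an operator on a real Banach space. -/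
def NumericalRadius {X : Type*} [NormedAddCommGroup X] [NormedSpace ℝ X] (T : X →L[ℝ] X) : ℝ :=
  sSup {r | ∃ (x : X) (φ : X →L[ℝ] ℝ), ‖x‖ = 1 ∧ ‖φ‖ = 1 ∧ φ x = 1 ∧ r = |φ (T x)|}

/-- The Bishop-Phelps-Bollobás property for numerical radius, witnessed by a
given function `δ`. -/
def HasBPBNumericalRadiusWith (X : Type*) [NormedAddCommGroup X] [NormedSpace ℝ X]
    (δ : ℝ → ℝ) : Prop :=
  ∀ ε : ℝ, 0 < ε → ε < 1 →
    ∀ T : X →L[ℝ] X, NumericalRadius T = 1 →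
      ∀ (x : X) (φ : X →L[ℝ] ℝ), ‖x‖ = 1 → ‖φ‖ = 1 → φ x = 1 →
        1 - δ ε ≤ φ (T x) →
        ∃ (T₀ : X →L[ℝ] X) (x₀ : X) (φ₀ : X →L[ℝ] ℝ),
          NumericalRadius T₀ = 1 ∧ ‖x₀‖ = 1 ∧ ‖φ₀‖ = 1 ∧ φ₀ x₀ = 1 ∧
          φ₀ (T₀ x₀) = 1 ∧ NumericalRadius (T - T₀) ≤ ε ∧ ‖x - x₀‖ ≤ ε ∧ ‖φ - φ₀‖ ≤ ε

/-- The Bishop-Phelps-Bollobás property for numerical radius. -/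
def HasBPBNumericalRadius (X : Type*) [NormedAddCommGroup X] [NormedSpace ℝ X] : Prop :=
  ∃ δ : ℝ → ℝ, (∀ ε : ℝ, 0 < ε → ε < 1 → 0 < δ ε ∧ δ ε < 1) ∧ HasBPBNumericalRadiusWith X δ

/-- A closeness function for `K`: a continuous function `c` on
`{(x,y,z) ∈ K³ : y ≠ z}` with values in `[-1,1]` such that `c(x,y,z) = -c(x,z,y)`
whenever `y ≠ z` and `c(x,x,z) = 1` whenever `x ≠ z`. -/
def IsClosenessFunction (K : Type*) [TopologicalSpace K]
    (c : {p : K × K × K // p.2.1 ≠ p.2.2} → ℝ) : Prop :=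
  Continuous c ∧ (∀ p, c p ∈ Set.Icc (-1 : ℝ) 1) ∧
    (∀ (x y z : K) (h : y ≠ z), c ⟨(x, y, z), h⟩ = -c ⟨(x, z, y), h.symm⟩) ∧
    (∀ (x z : K) (h : x ≠ z), c ⟨(x, x, z), h⟩ = 1)

lemma mNorm_le_of (s : SignedMeasure K) {a b : ℝ}
    (ha : ∀ E, MeasurableSet E → s E ≤ a) (hb : ∀ E, MeasurableSet E → -s E ≤ b) :
    mNorm s ≤ a + b := by
  obtain ⟨i, hi₁, hi₂, hi₃, hpos, hneg⟩ := s.toJordanDecomposition_spec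
  rw [mNorm, SignedMeasure.totalVariation, Measure.add_apply, hpos, hneg,
    SignedMeasure.toMeasureOfZeroLE_apply _ hi₂ hi₁ MeasurableSet.univ,
    SignedMeasure.toMeasureOfLEZero_apply _ hi₃ hi₁.compl MeasurableSet.univ,
    ENNReal.toReal_add ENNReal.coe_ne_top ENNReal.coe_ne_top, ENNReal.coe_toReal,
    ENNReal.coe_toReal]
  simp only [Set.inter_univ, NNReal.coe_mk]
  exact add_le_add (ha i hi₁) (hb iᶜ hi₁.compl)

lemma sm_apply_eq (s : SignedMeasure K) {E : Set K} (hE : MeasurableSet E) :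
    s E = (s.toJordanDecomposition.posPart E).toReal -
      (s.toJordanDecomposition.negPart E).toReal := by
  conv_lhs => rw [← s.toSignedMeasure_toJordanDecomposition]
  rw [MeasureTheory.JordanDecomposition.toSignedMeasure, Measure.toSignedMeasure_sub_apply hE]
  rfl

lemma mNorm_eq (s : SignedMeasure K) :
    mNorm s = (s.toJordanDecomposition.posPart Set.univ).toReal +
      (s.toJordanDecomposition.negPart Set.univ).toReal := by
  rw [mNorm, SignedMeasure.totalVariation, Measure.add_apply,
    ENNReal.toReal_add (measure_ne_top _ _) (measure_ne_top _ _)]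

lemma part_le_univ (m : Measure K) [IsFiniteMeasure m] (E : Set K) :
    (m E).toReal ≤ (m Set.univ).toReal :=
  ENNReal.toReal_mono (measure_ne_top _ _) (measure_mono (Set.subset_univ E))

/-- If `ν ∈ M(K)` is a compensation of `μ ∈ M(K)`, then
`‖μ - ν‖ ≤ 2‖μ⁻‖` and `‖ν‖ ≤ ‖μ‖`. -/
theorem stmt1 (K : Type*) [TopologicalSpace K] [CompactSpace K] [T2Space K]
    [MeasurableSpace K] [BorelSpace K]
    (μ ν : SignedMeasure K)
    (hμreg : μ.totalVariation.Regular) (hνreg : ν.totalVariation.Regular)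
    (h : IsCompensation μ ν) :
    mNorm (μ - ν) ≤ 2 * (μ.toJordanDecomposition.negPart Set.univ).toReal ∧
      mNorm ν ≤ mNorm μ := by
  set P := μ.toJordanDecomposition.posPart with hP
  set N := μ.toJordanDecomposition.negPart with hN
  set p := (P Set.univ).toReal with hp
  set n := (N Set.univ).toReal with hn
  have hμE : ∀ E : Set K, MeasurableSet E → μ E = (P E).toReal - (N E).toReal :=
    fun E hE => sm_apply_eq μ hE
  have hμuniv : μ Set.univ = p - n := hμE _ MeasurableSet.univ
  rw [IsCompensation] at h
  by_cases hc : 0 < μ Set.univ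
  · rw [if_pos hc] at h
    obtain ⟨hν0, hνle, hνu⟩ := h
    have hν0' : ∀ E : Set K, MeasurableSet E → 0 ≤ ν E := fun E hE => by
      simpa using (VectorMeasure.le_iff.mp hν0) E hE
    have hνle' : ∀ E : Set K, MeasurableSet E → ν E ≤ (P E).toReal := fun E hE => by
      have := (VectorMeasure.le_iff.mp hνle) E hE
      rwa [Measure.toSignedMeasure_apply_measurable hE] at this
    constructor
    · have key : mNorm (μ - ν) ≤ n + n := by
        apply mNorm_le_of
        · intro E hE
          rw [VectorMeasure.sub_apply, hμE E hE]
          have h1 : ν Set.univ = ν E + ν Eᶜ := by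
            rw [← VectorMeasure.of_union disjoint_compl_right hE hE.compl,
              Set.union_compl_self]
          have h2 : p = (P E).toReal + (P Eᶜ).toReal := by
            rw [hp, ← ENNReal.toReal_add (measure_ne_top _ _) (measure_ne_top _ _),
              measure_add_measure_compl hE]
          have h3 : ν Eᶜ ≤ (P Eᶜ).toReal := hνle' _ hE.compl
          have h4 : 0 ≤ (N E).toReal := ENNReal.toReal_nonneg
          rw [hνu, hμuniv] at h1
          linarith
        · intro E hE
          rw [VectorMeasure.sub_apply, hμE E hE]
          have h1 : ν E ≤ (P E).toReal := hνle' E hE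
          have h2 : (N E).toReal ≤ n := part_le_univ N E
          linarith
      linarith
    · have key : mNorm ν ≤ p + n := by
        apply mNorm_le_of
        · intro E hE
          exact (hνle' E hE).trans (part_le_univ P E)
        · intro E hE
          have := hν0' E hE
          have : -ν E ≤ 0 := by linarith
          exact this.trans ENNReal.toReal_nonneg
      rw [mNorm_eq μ]
      exact key
  · rw [if_neg hc] at h
    subst h
    push_neg at hc
    have hpn : p ≤ n := by linarith [hμuniv, hc]
    constructor
    · rw [sub_zero]
      have key : mNorm μ ≤ n + n := by
        apply mNorm_le_of
        · intro E hE
          rw [hμE E hE]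
          have h1 : (P E).toReal ≤ p := part_le_univ P E
          have h2 : 0 ≤ (N E).toReal := ENNReal.toReal_nonneg
          linarith
        · intro E hE
          rw [hμE E hE]
          have h1 : 0 ≤ (P E).toReal := ENNReal.toReal_nonneg
          have h2 : (N E).toReal ≤ n := part_le_univ N E
          linarith
      linarith
    · have : mNorm (0 : SignedMeasure K) = 0 := by
        rw [mNorm, SignedMeasure.totalVariation_zero]; simp
      rw [this, mNorm]
      exact ENNReal.toReal_nonneg

end
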